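/- Second-order upper bound for the symmetric softmax: for all x, y ∈ ℝ^d, lmax(y) ≤ lmax(x) + ⟨∇lmax(x), y − x⟩ + (1/2)·‖y − x‖_∞². -/

import Mathlib

noncomputable def linf {ι : Type*} [Fintype ι] (x : ι → ℝ) : ℝ := ⨆ i, |x i|

def l1 {ι : Type*} [Fintype ι] (x : ι → ℝ) : ℝ := ∑ i, |x i|

noncomputable def lmax {ι : Type*} [Fintype ι] (x : ι → ℝ) : ℝ :=
  Real.log (∑ i, (Real.exp (x i) + Real.exp (-x i)))

noncomputable def lmaxGrad {ι : Type*} [Fintype ι] (x : ι → ℝ) : ι → ℝ :=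
  fun i => (Real.exp (x i) - Real.exp (-x i)) / ∑ j, (Real.exp (x j) + Real.exp (-x j))

open Real Finset

theorem lmax_second_order {d : ℕ} (hd : 1 ≤ d) (x y : Fin d → ℝ) :
    lmax y ≤ lmax x + (∑ i, lmaxGrad x i * (y i - x i))
      + (1 / 2) * (linf (fun i => y i - x i)) ^ 2 := by
  have hne : Nonempty (Fin d) := ⟨⟨0, hd⟩⟩
  set u : Fin d → ℝ := fun i => y i - x i with hu
  set M : ℝ := linf u with hM
  have hbdd : BddAbove (Set.range fun i => |u i|) := Set.Finite.bddAbove (Set.finite_range _)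
  have habs : ∀ i, |u i| ≤ M := by
    intro i
    rw [hM]; unfold linf
    exact le_ciSup hbdd i
  have hM0 : 0 ≤ M := le_trans (abs_nonneg _) (habs ⟨0, hd⟩)
  set G : ℝ → ℝ := fun t => ∑ i, (exp (x i + t * u i) + exp (-(x i + t * u i))) with hG
  set G1 : ℝ → ℝ := fun t => ∑ i, (exp (x i + t * u i) * u i - exp (-(x i + t * u i)) * u i) with hG1
  set G2 : ℝ → ℝ := fun t =>
    ∑ i, (exp (x i + t * u i) * u i * u i + exp (-(x i + t * u i)) * u i * u i) with hG2
  have hGpos : ∀ t, 0 < G t := by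
    intro t
    exact Finset.sum_pos (fun i _ => by positivity) univ_nonempty
  have hinner : ∀ (i : Fin d) (t : ℝ), HasDerivAt (fun s => x i + s * u i) (u i) t := by
    intro i t
    simpa using (hasDerivAt_mul_const (u i)).const_add (x i)
  have hdG : ∀ t, HasDerivAt G (G1 t) t := by
    intro t
    apply HasDerivAt.fun_sum
    intro i _
    have h1 := (hinner i t).exp
    have h2 := ((hinner i t).fun_neg).exp
    simpa only [mul_neg, ← sub_eq_add_neg] using h1.fun_add h2
  have hdG1 : ∀ t, HasDerivAt G1 (G2 t) t := by
    intro t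
    apply HasDerivAt.fun_sum
    intro i _
    have h1 := ((hinner i t).exp).mul_const (u i)
    have h2 := (((hinner i t).fun_neg).exp).mul_const (u i)
    simpa only [mul_neg, neg_mul, sub_neg_eq_add] using h1.fun_sub h2
  have hG2le : ∀ t, G2 t ≤ M ^ 2 * G t := by
    intro t
    rw [hG2, hG, Finset.mul_sum]
    apply Finset.sum_le_sum
    intro i _
    have h2 : u i * u i ≤ M ^ 2 := by
      nlinarith [habs i, abs_nonneg (u i), sq_abs (u i)]
    nlinarith [exp_pos (x i + t * u i), exp_pos (-(x i + t * u i))]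
  -- H is antitone on [0,1]
  set H : ℝ → ℝ := fun t => G1 t / G t - M ^ 2 * t with hH
  have hdH : ∀ t, HasDerivAt H ((G2 t * G t - G1 t * G1 t) / (G t) ^ 2 - M ^ 2) t := by
    intro t
    have h1 := (hdG1 t).div (hdG t) (hGpos t).ne'
    have h2 : HasDerivAt (fun s : ℝ => M ^ 2 * s) (M ^ 2) t := by
      simpa using (hasDerivAt_id t).const_mul (M ^ 2)
    exact h1.sub h2
  have hHanti : AntitoneOn H (Set.Icc 0 1) := by
    apply antitoneOn_of_deriv_nonpos (convex_Icc 0 1)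
    · exact fun t _ => (hdH t).continuousAt.continuousWithinAt
    · exact fun t _ => (hdH t).differentiableAt.differentiableWithinAt
    · intro t _
      rw [(hdH t).deriv]
      have hnum : G2 t * G t - G1 t * G1 t ≤ M ^ 2 * (G t) ^ 2 := by
        nlinarith [hG2le t, hGpos t, sq_nonneg (G1 t)]
      linarith [(div_le_iff₀ (by positivity : (0:ℝ) < (G t) ^ 2)).2 hnum]
  set K : ℝ → ℝ := fun t => log (G t) - (G1 0 / G 0 * t + M ^ 2 * (t ^ 2 / 2)) with hK
  have hdK : ∀ t, HasDerivAt K (G1 t / G t - (G1 0 / G 0 + M ^ 2 * t)) t := by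
    intro t
    have h1 := (hdG t).log (hGpos t).ne'
    have h2 : HasDerivAt (fun s : ℝ => G1 0 / G 0 * s + M ^ 2 * (s ^ 2 / 2))
        (G1 0 / G 0 + M ^ 2 * t) t := by
      have ha : HasDerivAt (fun s : ℝ => G1 0 / G 0 * s) (G1 0 / G 0) t := by
        simpa using (hasDerivAt_id t).const_mul (G1 0 / G 0)
      have hb : HasDerivAt (fun s : ℝ => M ^ 2 * (s ^ 2 / 2)) (M ^ 2 * t) t := by
        have := ((hasDerivAt_pow 2 t).div_const 2).const_mul (M ^ 2)
        refine this.congr_deriv ?_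
        ring
      exact ha.add hb
    exact h1.sub h2
  have hKanti : AntitoneOn K (Set.Icc 0 1) := by
    apply antitoneOn_of_deriv_nonpos (convex_Icc 0 1)
    · exact fun t _ => (hdK t).continuousAt.continuousWithinAt
    · exact fun t _ => (hdK t).differentiableAt.differentiableWithinAt
    · intro t ht
      rw [interior_Icc] at ht
      rw [(hdK t).deriv]
      have h01 : (0:ℝ) ∈ Set.Icc (0:ℝ) 1 := by simp
      have ht1 : t ∈ Set.Icc (0:ℝ) 1 := ⟨le_of_lt ht.1, le_of_lt ht.2⟩
      have := hHanti h01 ht1 (le_of_lt ht.1)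
      rw [hH] at this
      simp only at this
      linarith
  have hfin : K 1 ≤ K 0 := hKanti (by simp) (by norm_num) zero_le_one
  rw [hK] at hfin
  simp only at hfin
  -- identify terms
  have hGy : G 1 = ∑ i, (exp (y i) + exp (- y i)) := by
    rw [hG]
    have hx : ∀ i : Fin d, x i + 1 * u i = y i := by intro i; simp only [hu]; ring
    apply Finset.sum_congr rfl
    intro i _
    rw [hx i]
  have hGx : G 0 = ∑ i, (exp (x i) + exp (- x i)) := by
    rw [hG]
    apply Finset.sum_congr rfl
    intro i _
    norm_num
  have hG10 : G1 0 = ∑ i, (exp (x i) * u i - exp (- x i) * u i) := by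
    rw [hG1]
    norm_num
  have hsum : (∑ i, lmaxGrad x i * (y i - x i)) = G1 0 / G 0 := by
    rw [hG10, hGx, Finset.sum_div]
    apply Finset.sum_congr rfl
    intro i _
    have hS : (0:ℝ) < ∑ j, (exp (x j) + exp (- x j)) :=
      Finset.sum_pos (fun j _ => by positivity) univ_nonempty
    have hui : u i = y i - x i := rfl
    simp only [lmaxGrad]
    rw [← hui, div_mul_eq_mul_div, sub_mul]
  have h1 : lmax y = log (G 1) := by rw [lmax, hGy]
  have h2 : lmax x = log (G 0) := by rw [lmax, hGx]
  rw [h1, h2, hsum]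
  nlinarith [hfin]
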